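/- Fix c, δ, η > 0. There exists a constant C > 0 such that for all u ∈ ℂ with Re u ≥ −η, |Im u| ≤ η, dist(u, ℤ) ≥ δ and dist(u, ℤ − c) ≥ δ, one has |Γ(−u−c)/Γ(−u)| ≤ C · |1 + u + c|^{−c}. -/

import Mathlib

open Set MeasureTheory

noncomputable section

namespace GammaRatioAux

lemma abs_sin_sq (x y : ℝ) :
    (‖Complex.sin (x + y * Complex.I)‖)^2
      = Real.sin x ^ 2 + Real.sinh y ^ 2 := by
  have h : Complex.sin ((x:ℂ) + (y:ℂ) * Complex.I)
      = ((Real.sin x * Real.cosh y : ℝ) : ℂ)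
          + ((Real.cos x * Real.sinh y : ℝ) : ℂ) * Complex.I := by
    rw [Complex.sin_add, Complex.sin_mul_I, Complex.cos_mul_I]
    push_cast
    ring
  rw [h, Complex.sq_norm, Complex.normSq_add_mul_I]
  nlinarith [Real.sin_sq_add_cos_sq x, Real.cosh_sq y]

lemma abs_sin_sq' (w : ℂ) :
    (‖Complex.sin w‖)^2 = Real.sin w.re ^ 2 + Real.sinh w.im ^ 2 := by
  conv_lhs => rw [← Complex.re_add_im w]
  exact abs_sin_sq w.re w.im

lemma sin_upper (z : ℂ) : ‖Complex.sin z‖ ≤ Real.exp |z.im| := by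
  refine le_of_pow_le_pow_left₀ two_ne_zero (Real.exp_pos _).le ?_
  rw [abs_sin_sq' z]
  have h1 : Real.sinh z.im ^ 2 = Real.sinh |z.im| ^ 2 := by
    rcases abs_cases z.im with ⟨h, _⟩ | ⟨h, _⟩ <;> rw [h]
    rw [Real.sinh_neg]; ring
  have h2 : Real.cosh |z.im| ≤ Real.exp |z.im| := by
    rw [Real.cosh_eq]
    have h3 : Real.exp (-|z.im|) ≤ Real.exp |z.im| :=
      Real.exp_le_exp.mpr (by nlinarith [abs_nonneg z.im])
    linarith
  nlinarith [Real.sin_sq_le_one z.re, Real.cosh_sq |z.im|, Real.cosh_pos (x := |z.im|)]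

lemma sin_lower (δ : ℝ) (hδ : 0 < δ) :
    ∃ m : ℝ, 0 < m ∧ ∀ z : ℂ, (∀ n : ℤ, δ ≤ ‖z - (n : ℂ)‖) →
      m ≤ ‖Complex.sin ((Real.pi : ℂ) * z)‖ := by
  obtain ⟨d, hd0, hd1, hd2⟩ : ∃ d : ℝ, 0 < d ∧ d ≤ 1/2 ∧ 2*d ≤ min δ 1 := by
    refine ⟨min δ 1 / 2, by positivity, ?_, by linarith⟩
    have := min_le_right δ 1
    linarith
  have hsin_d : 0 < Real.sin (Real.pi * d) := by
    apply Real.sin_pos_of_pos_of_lt_pi (by positivity)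
    nlinarith [Real.pi_pos]
  have hsinh_d : 0 < Real.sinh (Real.pi * d) := by
    rw [Real.sinh_pos_iff]; positivity
  refine ⟨min (Real.sin (Real.pi * d)) (Real.sinh (Real.pi * d)), lt_min hsin_d hsinh_d, ?_⟩
  intro z hz
  have hm1 : min (Real.sin (Real.pi * d)) (Real.sinh (Real.pi * d)) ≤ Real.sin (Real.pi * d) :=
    min_le_left _ _
  have hm2 : min (Real.sin (Real.pi * d)) (Real.sinh (Real.pi * d)) ≤ Real.sinh (Real.pi * d) :=
    min_le_right _ _
  set x := z.re with hxdef
  set y := z.im with hydef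
  obtain ⟨n, hn⟩ : ∃ n : ℤ, |x - (n:ℝ)| ≤ 1/2 := ⟨round x, abs_sub_round x⟩
  have hzn : min δ 1 ≤ ‖z - (n : ℂ)‖ := (min_le_left δ 1).trans (hz n)
  have hzn2 : (2*d)^2 ≤ (x - (n:ℝ))^2 + y^2 := by
    have h1 : ‖z - (n:ℂ)‖^2 = (x - (n:ℝ))^2 + y^2 := by
      rw [Complex.sq_norm, Complex.normSq_apply]
      simp [hxdef, hydef]
      ring
    nlinarith [norm_nonneg (z - (n:ℂ))]
  have hkey : (‖Complex.sin ((Real.pi : ℂ) * z)‖)^2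
      = Real.sin (Real.pi * x)^2 + Real.sinh (Real.pi * y)^2 := by
    rw [abs_sin_sq' ((Real.pi : ℂ) * z)]
    congr 2
    · simp [Complex.mul_re, hxdef]
    · simp [Complex.mul_im, hydef]
  refine le_of_pow_le_pow_left₀ two_ne_zero (norm_nonneg _) ?_
  rw [hkey]
  by_cases hy : d ≤ |y|
  · have h1 : Real.sinh (Real.pi * d) ≤ |Real.sinh (Real.pi * y)| := by
      rw [Real.abs_sinh, Real.sinh_le_sinh, abs_mul, abs_of_pos Real.pi_pos]
      exact mul_le_mul_of_nonneg_left hy Real.pi_pos.le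
    have hb : 0 ≤ min (Real.sin (Real.pi * d)) (Real.sinh (Real.pi * d)) :=
      (lt_min hsin_d hsinh_d).le
    have h2 := pow_le_pow_left₀ hb (hm2.trans h1) 2
    rw [sq_abs] at h2
    linarith [sq_nonneg (Real.sin (Real.pi * x))]
  · push_neg at hy
    set t : ℝ := x - (n:ℝ) with ht
    have htd : d ≤ |t| := by
      have h4 : y^2 < d^2 := by nlinarith [abs_nonneg y, sq_abs y]
      nlinarith [sq_abs t, abs_nonneg t]
    have e1 : Real.sin (Real.pi * x) = (-1 : ℝ)^n * Real.sin (Real.pi * t) := by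
      have h7 := Real.sin_add_int_mul_pi (Real.pi * t) n
      rw [show Real.pi * t + (n:ℝ) * Real.pi = Real.pi * x by rw [ht]; ring] at h7
      rw [h7]
    have e2 : ((-1 : ℝ)^n)^2 = 1 := by
      have h5 : ((-1:ℝ)^n)^(2:ℤ) = ((-1:ℝ)^(2:ℤ))^n := by
        rw [← zpow_mul, ← zpow_mul, mul_comm]
      have h6 : ((-1:ℝ)^n)^(2:ℕ) = ((-1:ℝ)^n)^(2:ℤ) := (zpow_natCast _ 2).symm
      rw [h6, h5]; norm_num
    have e3 : Real.sin (Real.pi * x)^2 = Real.sin (Real.pi * t)^2 := by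
      rw [e1, mul_pow, e2, one_mul]
    have e4 : Real.sin (Real.pi * t)^2 = Real.sin (Real.pi * |t|)^2 := by
      rcases abs_cases t with ⟨h, _⟩ | ⟨h, _⟩ <;> rw [h]
      rw [mul_neg, Real.sin_neg]; ring
    have e5 : Real.sin (Real.pi * d) ≤ Real.sin (Real.pi * |t|) := by
      have k0 : (0:ℝ) ≤ Real.pi * d := by positivity
      have k1 : Real.pi * d ≤ Real.pi * (1/2) :=
        mul_le_mul_of_nonneg_left hd1 Real.pi_pos.le
      have k2 : Real.pi * |t| ≤ Real.pi * (1/2) := by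
        have ht2 : |t| ≤ 1/2 := by rw [ht]; exact hn
        exact mul_le_mul_of_nonneg_left ht2 Real.pi_pos.le
      have k3 : (0:ℝ) ≤ Real.pi * |t| := by positivity
      have m1 : Real.pi * d ∈ Set.Icc (-(Real.pi/2)) (Real.pi/2) :=
        Set.mem_Icc.mpr ⟨by linarith, by linarith⟩
      have m2 : Real.pi * |t| ∈ Set.Icc (-(Real.pi/2)) (Real.pi/2) :=
        Set.mem_Icc.mpr ⟨by linarith, by linarith⟩
      exact Real.strictMonoOn_sin.monotoneOn m1 m2
        (mul_le_mul_of_nonneg_left htd Real.pi_pos.le)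
    have hb : 0 ≤ min (Real.sin (Real.pi * d)) (Real.sinh (Real.pi * d)) :=
      (lt_min hsin_d hsinh_d).le
    have h2 := pow_le_pow_left₀ hb (hm1.trans e5) 2
    rw [← e4, ← e3] at h2
    linarith [sq_nonneg (Real.sinh (Real.pi * y))]


lemma ratio_eq (c : ℝ) (u : ℂ)
    (hs1 : Complex.sin ((Real.pi : ℂ) * u) ≠ 0)
    (hs2 : Complex.sin ((Real.pi : ℂ) * (u + c)) ≠ 0)
    (hg1 : Complex.Gamma (1 + u) ≠ 0)
    (hg2 : Complex.Gamma (1 + u + c) ≠ 0) :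
    Complex.Gamma (-u - c) / Complex.Gamma (-u)
      = Complex.sin ((Real.pi : ℂ) * u) * Complex.Gamma (1 + u)
        / (Complex.sin ((Real.pi : ℂ) * (u + c)) * Complex.Gamma (1 + u + c)) := by
  have hpi : (Real.pi : ℂ) ≠ 0 := Complex.ofReal_ne_zero.mpr Real.pi_ne_zero
  have e2 := Complex.Gamma_mul_Gamma_one_sub (-u)
  rw [show (1 : ℂ) - -u = 1 + u by ring,
      show (Real.pi : ℂ) * -u = -((Real.pi : ℂ) * u) by ring, Complex.sin_neg] at e2
  have e1 := Complex.Gamma_mul_Gamma_one_sub (-u - c)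
  rw [show (1 : ℂ) - (-u - c) = 1 + u + c by ring,
      show (Real.pi : ℂ) * (-u - c) = -((Real.pi : ℂ) * (u + c)) by ring,
      Complex.sin_neg] at e1
  have hΓu : Complex.Gamma (-u) ≠ 0 := by
    intro h0
    rw [h0, zero_mul] at e2
    exact div_ne_zero hpi (neg_ne_zero.mpr hs1) e2.symm
  rw [eq_div_iff (neg_ne_zero.mpr hs1)] at e2
  rw [eq_div_iff (neg_ne_zero.mpr hs2)] at e1
  rw [div_eq_div_iff hΓu (mul_ne_zero hs2 hg2)]
  linear_combination e2 - e1

lemma beta_bound {c : ℝ} (hc : 0 < c) {u : ℂ} (hu : 0 < u.re) :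
    ‖Complex.betaIntegral (1 + u) (c : ℂ)‖ ≤ Real.Gamma c * u.re ^ (-c) := by
  set x := u.re with hx
  -- integrability on Ioi 0
  have hint : IntegrableOn (fun t : ℝ => t ^ (c - 1) * Real.exp (-(x * t))) (Ioi (0:ℝ)) := by
    have h0 : IntegrableOn
        (fun t : ℝ => Real.exp (-(x * t)) * (x * t) ^ (c - 1)) (Ioi (0:ℝ)) := by
      have h1 := Real.GammaIntegral_convergent hc
      have := (integrableOn_Ioi_comp_mul_left_iff
        (fun s : ℝ => Real.exp (-s) * s ^ (c - 1)) 0 hu).mpr (by simpa using h1)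
      simpa using this
    have h1 := h0.const_mul ((x ^ (c - 1))⁻¹)
    refine h1.congr ?_
    rw [Filter.EventuallyEq, ae_restrict_iff' measurableSet_Ioi]
    filter_upwards with t ht
    rw [mem_Ioi] at ht
    rw [Real.mul_rpow hu.le ht.le]
    have hxc : (0:ℝ) < x ^ (c - 1) := Real.rpow_pos_of_pos hu _
    field_simp
  -- pointwise bound a.e.
  have hae : ∀ᵐ t : ℝ ∂volume, t ∈ Set.uIoc (0:ℝ) 1 →
      ‖(t : ℂ) ^ ((1 : ℂ) + u - 1) * (1 - (t : ℂ)) ^ ((c : ℂ) - 1)‖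
        ≤ (1 - t) ^ (c - 1) * Real.exp (-(x * (1 - t))) := by
    have h1 : ∀ᵐ t : ℝ ∂volume, t ∉ ({1} : Set ℝ) :=
      measure_eq_zero_iff_ae_notMem.mp (measure_singleton 1)
    filter_upwards [h1] with t ht1 htI
    rw [Set.mem_singleton_iff] at ht1
    rw [Set.uIoc_of_le zero_le_one] at htI
    have ht0 : 0 < t := htI.1
    have htlt : t < 1 := lt_of_le_of_ne htI.2 ht1
    have h1t : 0 < 1 - t := by linarith
    rw [norm_mul,
      show (1 : ℂ) + u - 1 = u by ring,
      Complex.norm_cpow_eq_rpow_re_of_pos ht0,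
      show (1 : ℂ) - (t : ℂ) = ((1 - t : ℝ) : ℂ) by push_cast; ring,
      Complex.norm_cpow_eq_rpow_re_of_pos h1t]
    have hre : ((c : ℂ) - 1).re = c - 1 := by simp
    rw [hre]
    have hexp : t ^ x ≤ Real.exp (-(x * (1 - t))) := by
      have h3 : t ≤ Real.exp (t - 1) := by
        have := Real.add_one_le_exp (t - 1)
        linarith
      calc t ^ x ≤ Real.exp (t - 1) ^ x := Real.rpow_le_rpow ht0.le h3 hu.le
        _ = Real.exp ((t - 1) * x) := (Real.exp_mul _ _).symm
        _ = Real.exp (-(x * (1 - t))) := by ring_nf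
    calc t ^ x * (1 - t) ^ (c - 1)
        ≤ Real.exp (-(x * (1 - t))) * (1 - t) ^ (c - 1) :=
          mul_le_mul_of_nonneg_right hexp (Real.rpow_nonneg h1t.le _)
      _ = (1 - t) ^ (c - 1) * Real.exp (-(x * (1 - t))) := by ring
  -- integrability of the bounding function on [0,1]
  have hgint : IntervalIntegrable
      (fun t : ℝ => (1 - t) ^ (c - 1) * Real.exp (-(x * (1 - t)))) volume 0 1 := by
    have hbase : IntervalIntegrable
        (fun s : ℝ => s ^ (c - 1) * Real.exp (-(x * s))) volume 0 1 := by
      have h1 : IntervalIntegrable (fun s : ℝ => s ^ (c - 1)) volume 0 1 :=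
        intervalIntegral.intervalIntegrable_rpow' (by linarith)
      exact h1.mul_continuousOn (by fun_prop)
    have h2 := hbase.comp_sub_left 1
    simpa using h2.symm
  -- chain
  have step1 : ‖Complex.betaIntegral (1 + u) (c : ℂ)‖
      ≤ ∫ t in (0:ℝ)..1, (1 - t) ^ (c - 1) * Real.exp (-(x * (1 - t))) := by
    rw [Complex.betaIntegral]
    refine le_trans (intervalIntegral.norm_integral_le_abs_of_norm_le
      ((ae_restrict_iff' measurableSet_uIoc).mpr hae) hgint) (le_of_eq (abs_of_nonneg ?_))
    apply intervalIntegral.integral_nonneg zero_le_one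
    intro t ht
    rw [Set.mem_Icc] at ht
    exact mul_nonneg (Real.rpow_nonneg (by linarith [ht.2]) _) (Real.exp_pos _).le
  have step2 : (∫ t in (0:ℝ)..1, (1 - t) ^ (c - 1) * Real.exp (-(x * (1 - t))))
      = ∫ s in (0:ℝ)..1, s ^ (c - 1) * Real.exp (-(x * s)) := by
    have := intervalIntegral.integral_comp_sub_left (a := 0) (b := 1)
      (fun s : ℝ => s ^ (c - 1) * Real.exp (-(x * s))) 1
    simpa using this
  have step3 : (∫ s in (0:ℝ)..1, s ^ (c - 1) * Real.exp (-(x * s)))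
      ≤ ∫ s in Ioi (0:ℝ), s ^ (c - 1) * Real.exp (-(x * s)) := by
    rw [intervalIntegral.integral_of_le zero_le_one]
    refine setIntegral_mono_set hint ?_ (Ioc_subset_Ioi_self.eventuallyLE)
    exact (ae_restrict_iff' measurableSet_Ioi).mpr (Filter.Eventually.of_forall
      fun s hs => mul_nonneg (Real.rpow_nonneg (le_of_lt hs) _) (Real.exp_pos _).le)
  have step4 : (∫ s in Ioi (0:ℝ), s ^ (c - 1) * Real.exp (-(x * s)))
      = (1 / x) ^ c * Real.Gamma c :=
    Real.integral_rpow_mul_exp_neg_mul_Ioi hc hu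
  have step5 : (1 / x) ^ c * Real.Gamma c = Real.Gamma c * x ^ (-c) := by
    rw [one_div, Real.inv_rpow hu.le, ← Real.rpow_neg hu.le, mul_comm]
  linarith [step1, step2 ▸ step1, step3, step4, step5]

end GammaRatioAux



/-- **The bound (eq:preJ_bd) from the paper's proof of its β = 2 edge-fluctuation theorems.**

Fix `c, δ, η > 0`. There is `C > 0` such that for every `u ∈ ℂ` with `Re u ≥ −η`,
`|Im u| ≤ η`, `dist(u, ℤ) ≥ δ` and `dist(u, ℤ − c) ≥ δ`, one has
`|Γ(−u−c)/Γ(−u)| ≤ C · |1+u+c|^{−c}`. -/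
theorem gamma_ratio_bound_on_strip (c δ η : ℝ) (hc : 0 < c) (hδ : 0 < δ) (hη : 0 < η) :
    ∃ C : ℝ, 0 < C ∧ ∀ u : ℂ, -η ≤ u.re → |u.im| ≤ η →
      (∀ n : ℤ, δ ≤ ‖u - (n : ℂ)‖) →
      (∀ n : ℤ, δ ≤ ‖u - ((n : ℂ) - c)‖) →
      ‖Complex.Gamma (-u - c) / Complex.Gamma (-u)‖
        ≤ C * ‖1 + u + c‖ ^ (-c) := by

  classical
  obtain ⟨m, hm, hsin⟩ := GammaRatioAux.sin_lower δ hδ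
  set R : ℝ := η + 2 with hR
  set K : Set ℂ := {u : ℂ | (-η ≤ u.re ∧ u.re ≤ R) ∧ |u.im| ≤ η ∧
      (∀ n : ℤ, δ ≤ ‖u - (n : ℂ)‖) ∧
      (∀ n : ℤ, δ ≤ ‖u - ((n : ℂ) - (c : ℂ))‖)} with hK
  have hKclosed : IsClosed K := by
    have h1 : IsClosed {u : ℂ | -η ≤ u.re} := isClosed_le continuous_const Complex.continuous_re
    have h2 : IsClosed {u : ℂ | u.re ≤ R} := isClosed_le Complex.continuous_re continuous_const
    have h3 : IsClosed {u : ℂ | |u.im| ≤ η} :=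
      isClosed_le (continuous_abs.comp Complex.continuous_im) continuous_const
    have h4 : IsClosed {u : ℂ | ∀ n : ℤ, δ ≤ ‖u - (n : ℂ)‖} := by
      rw [Set.setOf_forall]
      exact isClosed_iInter fun n => isClosed_le continuous_const
        (continuous_norm.comp (continuous_id.sub continuous_const))
    have h5 : IsClosed {u : ℂ | ∀ n : ℤ, δ ≤ ‖u - ((n : ℂ) - (c : ℂ))‖} := by
      rw [Set.setOf_forall]
      exact isClosed_iInter fun n => isClosed_le continuous_const
        (continuous_norm.comp (continuous_id.sub continuous_const))
    exact (h1.inter h2).inter (h3.inter (h4.inter h5))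
  have hKbounded : Bornology.IsBounded K := by
    have hsub : K ⊆ Metric.closedBall 0 (R + η) := by
      intro u hu
      obtain ⟨⟨ha, hb⟩, hc', _⟩ := hu
      rw [Metric.mem_closedBall, Complex.dist_eq, sub_zero]
      have h6 := Complex.norm_le_abs_re_add_abs_im u
      have hre : |u.re| ≤ R := abs_le.mpr ⟨by rw [hR]; linarith, hb⟩
      linarith
    exact Metric.isBounded_closedBall.subset hsub
  have hKcompact : IsCompact K := Metric.isCompact_of_isClosed_isBounded hKclosed hKbounded
  have hcont : ContinuousOn (fun u : ℂ =>
      ‖Complex.Gamma (-u - c) / Complex.Gamma (-u)‖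
        * ‖1 + u + c‖ ^ c) K := by
    intro u hu
    obtain ⟨_, _, hd4, hd5⟩ := hu
    have hne1 : ∀ k : ℕ, -u - c ≠ -(k : ℂ) := by
      intro k hk
      have hu' : u = ((k : ℤ) : ℂ) - c := by push_cast; linear_combination -hk
      have h7 := hd5 (k : ℤ)
      rw [hu', sub_self, norm_zero] at h7
      linarith
    have hne2 : ∀ k : ℕ, -u ≠ -(k : ℂ) := by
      intro k hk
      have hu' : u = ((k : ℤ) : ℂ) := by push_cast; linear_combination -hk
      have h7 := hd4 (k : ℤ)
      rw [hu', sub_self, norm_zero] at h7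
      linarith
    apply ContinuousAt.continuousWithinAt
    apply ContinuousAt.mul
    · apply continuous_norm.continuousAt.comp
      apply ContinuousAt.div
      · have hmap : ContinuousAt (fun x : ℂ => -x - (c : ℂ)) u := by fun_prop
        exact ContinuousAt.comp (g := Complex.Gamma) (f := fun x : ℂ => -x - (c : ℂ)) (x := u)
          (Complex.differentiableAt_Gamma _ hne1).continuousAt hmap
      · have hmap : ContinuousAt (fun x : ℂ => -x) u := by fun_prop
        exact ContinuousAt.comp (g := Complex.Gamma) (f := fun x : ℂ => -x) (x := u)
          (Complex.differentiableAt_Gamma _ hne2).continuousAt hmap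
      · exact Complex.Gamma_ne_zero hne2
    · have hmap : ContinuousAt (fun x : ℂ => 1 + x + (c : ℂ)) u := by fun_prop
      have habs : ContinuousAt (fun x : ℂ => ‖1 + x + (c : ℂ)‖) u :=
        ContinuousAt.comp (g := fun z : ℂ => ‖z‖)
          (f := fun x : ℂ => 1 + x + (c : ℂ)) (x := u)
          continuous_norm.continuousAt hmap
      exact ContinuousAt.comp (g := fun y : ℝ => y ^ c)
        (f := fun x : ℂ => ‖1 + x + (c : ℂ)‖) (x := u)
        (Real.continuousAt_rpow_const _ _ (Or.inr hc.le)) habs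
  obtain ⟨B, hB⟩ := hKcompact.exists_bound_of_continuousOn hcont
  set C1 : ℝ := max B 1 with hC1
  set C2 : ℝ := (Real.exp (Real.pi * η) / m) * (2 + c + η) ^ c with hC2
  refine ⟨max C1 C2, lt_of_lt_of_le one_pos
    (le_trans (le_max_right B 1) (le_max_left C1 C2)), ?_⟩
  intro u hure him hdZ hdZc
  have habs_pos : 0 < ‖1 + u + c‖ := by
    have h8 := hdZc (-1)
    rw [show u - (((-1 : ℤ) : ℂ) - c) = 1 + u + c by push_cast; ring] at h8
    linarith
  have hT0 : 0 ≤ ‖1 + u + c‖ ^ (-c) :=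
    Real.rpow_nonneg (norm_nonneg _) _
  by_cases hcase : u.re ≤ R
  · -- bounded region
    have huK : u ∈ K := ⟨⟨hure, hcase⟩, him, hdZ, hdZc⟩
    have h1 := hB u huK
    rw [Real.norm_eq_abs] at h1
    have h2 : ‖Complex.Gamma (-u - c) / Complex.Gamma (-u)‖
        * ‖1 + u + c‖ ^ c ≤ max C1 C2 :=
      le_trans (le_trans (le_abs_self _) h1)
        (le_trans (le_max_left B 1) (le_max_left C1 C2))
    have key : ‖Complex.Gamma (-u - c) / Complex.Gamma (-u)‖
        = (‖Complex.Gamma (-u - c) / Complex.Gamma (-u)‖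
            * ‖1 + u + c‖ ^ c) * ‖1 + u + c‖ ^ (-c) := by
      rw [mul_assoc, ← Real.rpow_add habs_pos, add_neg_cancel, Real.rpow_zero, mul_one]
    rw [key]
    exact mul_le_mul_of_nonneg_right h2 hT0
  · -- tail region
    push_neg at hcase
    have hx1 : 1 ≤ u.re := by rw [hR] at hcase; linarith
    have hx0 : 0 < u.re := by linarith
    have hsinu := hsin u hdZ
    have hsinuc : m ≤ ‖Complex.sin ((Real.pi : ℂ) * (u + c))‖ := by
      apply hsin
      intro n
      calc δ ≤ ‖u - ((n : ℂ) - c)‖ := hdZc n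
        _ = ‖u + c - n‖ := by rw [show u - ((n : ℂ) - c) = u + c - n by ring]
    have hs1 : Complex.sin ((Real.pi : ℂ) * u) ≠ 0 := by
      intro h; rw [h, norm_zero] at hsinu; linarith
    have hs2 : Complex.sin ((Real.pi : ℂ) * (u + c)) ≠ 0 := by
      intro h; rw [h, norm_zero] at hsinuc; linarith
    have hre1 : (0 : ℝ) < (1 + u).re := by
      rw [Complex.add_re, Complex.one_re]; linarith
    have hre2 : (0 : ℝ) < (1 + u + (c : ℂ)).re := by
      rw [Complex.add_re, Complex.add_re, Complex.one_re, Complex.ofReal_re]; linarith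
    have hg1 : Complex.Gamma (1 + u) ≠ 0 := Complex.Gamma_ne_zero_of_re_pos hre1
    have hg2 : Complex.Gamma (1 + u + c) ≠ 0 := Complex.Gamma_ne_zero_of_re_pos hre2
    have hgc : Complex.Gamma ((c : ℂ)) ≠ 0 :=
      Complex.Gamma_ne_zero_of_re_pos (by rw [Complex.ofReal_re]; exact hc)
    have heq := GammaRatioAux.ratio_eq c u hs1 hs2 hg1 hg2
    have hbeta := Complex.Gamma_mul_Gamma_eq_betaIntegral hre1
      (by rw [Complex.ofReal_re]; exact hc : (0 : ℝ) < ((c : ℂ)).re)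
    have hdivΓ : Complex.Gamma (1 + u) / Complex.Gamma (1 + u + c)
        = Complex.betaIntegral (1 + u) c / Complex.Gamma (c : ℂ) := by
      rw [div_eq_div_iff hg2 hgc]
      linear_combination hbeta
    have hΓratio : ‖Complex.Gamma (1 + u)‖ / ‖Complex.Gamma (1 + u + c)‖
        ≤ u.re ^ (-c) := by
      rw [← norm_div, hdivΓ, norm_div]
      have hgcabs : ‖Complex.Gamma ((c : ℂ))‖ = Real.Gamma c := by
        rw [Complex.Gamma_ofReal, Complex.norm_real, Real.norm_eq_abs, abs_of_pos (Real.Gamma_pos_of_pos hc)]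
      rw [hgcabs, div_le_iff₀ (Real.Gamma_pos_of_pos hc)]
      calc ‖Complex.betaIntegral (1 + u) c‖
          ≤ Real.Gamma c * u.re ^ (-c) := GammaRatioAux.beta_bound hc hx0
        _ = u.re ^ (-c) * Real.Gamma c := by ring
    have hsin_up : ‖Complex.sin ((Real.pi : ℂ) * u)‖ ≤ Real.exp (Real.pi * η) := by
      refine le_trans (GammaRatioAux.sin_upper _) ?_
      apply Real.exp_le_exp.mpr
      have him2 : |((Real.pi : ℂ) * u).im| = Real.pi * |u.im| := by
        have h9 : ((Real.pi : ℂ) * u).im = Real.pi * u.im := by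
          rw [Complex.mul_im, Complex.ofReal_re, Complex.ofReal_im, zero_mul, add_zero]
        rw [h9, abs_mul, abs_of_pos Real.pi_pos]
      rw [him2]
      exact mul_le_mul_of_nonneg_left him Real.pi_pos.le
    have hcomp : ‖1 + u + c‖ ≤ (2 + c + η) * u.re := by
      have h1 : ‖1 + u + c‖ ≤ ‖u‖ + ‖1 + (c : ℂ)‖ := by
        calc ‖1 + u + c‖ = ‖u + (1 + (c : ℂ))‖ := by ring_nf
          _ ≤ _ := norm_add_le _ _
      have h2 : ‖1 + (c : ℂ)‖ = 1 + c := by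
        rw [show (1 + (c : ℂ)) = ((1 + c : ℝ) : ℂ) by push_cast; ring, Complex.norm_real, Real.norm_eq_abs]
        exact abs_of_pos (by linarith)
      have h3 : ‖u‖ ≤ u.re + η := by
        have h10 := Complex.norm_le_abs_re_add_abs_im u
        rw [abs_of_pos hx0] at h10
        linarith
      nlinarith
    have hrpow : u.re ^ (-c) ≤ (2 + c + η) ^ c * ‖1 + u + c‖ ^ (-c) := by
      have h4 : ((2 + c + η) * u.re) ^ (-c) ≤ ‖1 + u + c‖ ^ (-c) :=
        Real.rpow_le_rpow_of_nonpos habs_pos hcomp (neg_nonpos.mpr hc.le)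
      have h5 : ((2 + c + η) * u.re) ^ (-c) = (2 + c + η) ^ (-c) * u.re ^ (-c) :=
        Real.mul_rpow (by linarith) hx0.le
      have h6 : (2 + c + η) ^ c * ((2 + c + η) ^ (-c) * u.re ^ (-c)) = u.re ^ (-c) := by
        rw [← mul_assoc, ← Real.rpow_add (by linarith), add_neg_cancel, Real.rpow_zero, one_mul]
      calc u.re ^ (-c) = (2 + c + η) ^ c * ((2 + c + η) ^ (-c) * u.re ^ (-c)) := h6.symm
        _ = (2 + c + η) ^ c * ((2 + c + η) * u.re) ^ (-c) := by rw [h5]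
        _ ≤ (2 + c + η) ^ c * ‖1 + u + c‖ ^ (-c) :=
          mul_le_mul_of_nonneg_left h4 (Real.rpow_nonneg (by linarith) _)
    rw [heq, norm_div, norm_mul, norm_mul, ← div_mul_div_comm]
    have hb1 : ‖Complex.sin ((Real.pi : ℂ) * u)‖
          / ‖Complex.sin ((Real.pi : ℂ) * (u + c))‖
        ≤ Real.exp (Real.pi * η) / m :=
      div_le_div₀ (Real.exp_pos _).le hsin_up hm hsinuc
    have hnn1 : 0 ≤ ‖Complex.Gamma (1 + u)‖ / ‖Complex.Gamma (1 + u + c)‖ :=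
      div_nonneg (norm_nonneg _) (norm_nonneg _)
    have hnn2 : 0 ≤ Real.exp (Real.pi * η) / m := div_nonneg (Real.exp_pos _).le hm.le
    calc ‖Complex.sin ((Real.pi : ℂ) * u)‖
          / ‖Complex.sin ((Real.pi : ℂ) * (u + c))‖
          * (‖Complex.Gamma (1 + u)‖ / ‖Complex.Gamma (1 + u + c)‖)
        ≤ (Real.exp (Real.pi * η) / m) * (u.re ^ (-c)) :=
          mul_le_mul hb1 hΓratio hnn1 hnn2
      _ ≤ (Real.exp (Real.pi * η) / m) * ((2 + c + η) ^ c * ‖1 + u + c‖ ^ (-c)) :=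
          mul_le_mul_of_nonneg_left hrpow hnn2
      _ = C2 * ‖1 + u + c‖ ^ (-c) := by rw [hC2]; ring
      _ ≤ max C1 C2 * ‖1 + u + c‖ ^ (-c) :=
          mul_le_mul_of_nonneg_right (le_max_right C1 C2) hT0
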